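/- Corollary 2.5 (first chain): let M ≥ m > 0 and x, y, z ∈ X with Re(My − x, x − my | z) ≥ 0. Then 0 ≤ ‖x|z‖‖y|z‖ − |(x,y|z)| ≤ ‖x|z‖‖y|z‖ − Re(x,y|z) ≤ (1/2)·((√M − √m)²/√(mM))·Re(x,y|z) ≤ (1/2)·((√M − √m)²/√(mM))·|(x,y|z)|. -/

import Mathlib

open RCLike

/-- A 2-inner product space over `𝕜 = ℝ` or `ℂ`. -/
structure TwoIP (𝕜 : Type) (X : Type) [RCLike 𝕜] [AddCommGroup X] [Module 𝕜 X] where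
  ip : X → X → X → 𝕜
  re_nonneg : ∀ x z : X, 0 ≤ re (ip x x z)
  im_zero : ∀ x z : X, im (ip x x z) = 0
  eq_zero_iff : ∀ x z : X, ip x x z = 0 ↔ ¬ LinearIndependent 𝕜 ![x, z]
  swap : ∀ x z : X, ip x x z = ip z z x
  conj_symm : ∀ x y z : X, ip x y z = (starRingEnd 𝕜) (ip y x z)
  smul_left : ∀ (α : 𝕜) (x y z : X), ip (α • x) y z = α * ip x y z
  add_left : ∀ x x' y z : X, ip (x + x') y z = ip x y z + ip x' y z

theorem stmt {𝕜 X : Type} [RCLike 𝕜] [AddCommGroup X] [Module 𝕜 X]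
    (T : TwoIP 𝕜 X) (hdim : 1 < Module.rank 𝕜 X) (x y z : X) (m M : ℝ) (hm : 0 < m) (hM : m ≤ M)
    (h : 0 ≤ re (T.ip (((M : ℝ) : 𝕜) • y - x) (x - ((m : ℝ) : 𝕜) • y) z)) :
    0 ≤ Real.sqrt (re (T.ip x x z)) * Real.sqrt (re (T.ip y y z)) - ‖T.ip x y z‖ ∧
    Real.sqrt (re (T.ip x x z)) * Real.sqrt (re (T.ip y y z)) - ‖T.ip x y z‖
      ≤ Real.sqrt (re (T.ip x x z)) * Real.sqrt (re (T.ip y y z)) - re (T.ip x y z) ∧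
    Real.sqrt (re (T.ip x x z)) * Real.sqrt (re (T.ip y y z)) - re (T.ip x y z)
      ≤ (1/2) * ((Real.sqrt M - Real.sqrt m) ^ 2 / Real.sqrt (m * M)) * re (T.ip x y z) ∧
    (1/2) * ((Real.sqrt M - Real.sqrt m) ^ 2 / Real.sqrt (m * M)) * re (T.ip x y z)
      ≤ (1/2) * ((Real.sqrt M - Real.sqrt m) ^ 2 / Real.sqrt (m * M)) * ‖T.ip x y z‖ := by
  have hM0 : (0:ℝ) < M := lt_of_lt_of_le hm hM
  set a := re (T.ip x x z) with ha
  set b := re (T.ip y y z) with hb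
  set c := T.ip x y z with hc
  have ha0 : 0 ≤ a := T.re_nonneg x z
  have hb0 : 0 ≤ b := T.re_nonneg y z
  -- right additivity and right (conjugate) homogeneity
  have hadd_r : ∀ u v w : X, T.ip u (v + w) z = T.ip u v z + T.ip u w z := by
    intro u v w
    rw [T.conj_symm, T.add_left, map_add, ← T.conj_symm, ← T.conj_symm]
  have hsmul_r : ∀ (α : 𝕜) (u v : X), T.ip u (α • v) z = (starRingEnd 𝕜) α * T.ip u v z := by
    intro α u v
    rw [T.conj_symm, T.smul_left, map_mul, ← T.conj_symm]
  have expand : ∀ (p q u v : X), T.ip (p + q) (u + v) z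
      = T.ip p u z + T.ip p v z + T.ip q u z + T.ip q v z := by
    intro p q u v
    rw [T.add_left, hadd_r, hadd_r]; ring
  have hsub : ∀ u v : X, u - v = u + (-1 : 𝕜) • v := by
    intro u v; rw [neg_one_smul, sub_eq_add_neg]
  -- the quadratic inequality from positivity
  have quad : ∀ t : ℝ, 0 ≤ a - 2*t*‖c‖^2 + t^2*(‖c‖^2*b) := by
    intro t
    set β : 𝕜 := -((t:𝕜) * c) with hβ
    have h0 := T.re_nonneg (x + β • y) z
    have e1 : T.ip (x + β • y) (x + β • y) z
        = T.ip x x z + (starRingEnd 𝕜) β * c + β * (starRingEnd 𝕜) c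
          + β * ((starRingEnd 𝕜) β * T.ip y y z) := by
      rw [expand, hsmul_r β x y, T.smul_left β y x z, T.conj_symm y x z,
        T.smul_left, hsmul_r, ← hc]
    rw [e1] at h0
    have e2 : (starRingEnd 𝕜) β * c = -((t:𝕜) * (‖c‖^2 : ℝ)) := by
      rw [hβ, map_neg, map_mul, RCLike.conj_ofReal]
      rw [neg_mul, mul_assoc, RCLike.conj_mul]
      push_cast; ring
    have e3 : β * (starRingEnd 𝕜) c = -((t:𝕜) * (‖c‖^2 : ℝ)) := by
      rw [hβ, neg_mul, mul_assoc, RCLike.mul_conj]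
      push_cast; ring
    have e4 : β * ((starRingEnd 𝕜) β * T.ip y y z)
        = ((t^2 * ‖c‖^2 : ℝ) : 𝕜) * T.ip y y z := by
      rw [hβ, map_neg, map_mul, RCLike.conj_ofReal]
      have : -((t:𝕜) * c) * (-((t:𝕜) * (starRingEnd 𝕜) c) * T.ip y y z)
          = ((t:𝕜)^2 * (c * (starRingEnd 𝕜) c)) * T.ip y y z := by ring
      rw [this, RCLike.mul_conj]
      push_cast; ring
    rw [e2, e3, e4, map_add, map_add, map_add] at h0
    simp only [map_neg, RCLike.re_ofReal_mul, RCLike.mul_re, RCLike.ofReal_re,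
      RCLike.ofReal_im, zero_mul, sub_zero] at h0
    -- h0 : 0 ≤ a + -(t * ‖c‖^2) + -(t * ‖c‖^2) + (t^2*‖c‖^2) * b
    nlinarith [h0]
  -- Cauchy–Schwarz
  have cs : ‖c‖ ≤ Real.sqrt a * Real.sqrt b := by
    rcases eq_or_lt_of_le hb0 with hb' | hb'
    · by_cases hcz : ‖c‖ = 0
      · rw [hcz]; positivity
      · exfalso
        have hc2 : 0 < ‖c‖^2 := by positivity
        have hq := quad ((a+1)/(2*‖c‖^2))
        rw [← hb'] at hq
        have he : 2*((a+1)/(2*‖c‖^2))*‖c‖^2 = a+1 := by field_simp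
        nlinarith [hq, he]
    · have hq := quad (1/b)
      have hle : ‖c‖^2 ≤ a * b := by
        have hb'' : b ≠ 0 := ne_of_gt hb'
        have he : a - 2*(1/b)*‖c‖^2 + (1/b)^2*(‖c‖^2*b) = a - ‖c‖^2/b := by
          field_simp; ring
        rw [he] at hq
        have : ‖c‖^2/b ≤ a := by linarith
        calc ‖c‖^2 = (‖c‖^2/b)*b := by field_simp
          _ ≤ a*b := mul_le_mul_of_nonneg_right this hb0
      calc ‖c‖ = Real.sqrt (‖c‖^2) := by rw [Real.sqrt_sq (norm_nonneg c)]
        _ ≤ Real.sqrt (a*b) := Real.sqrt_le_sqrt hle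
        _ = Real.sqrt a * Real.sqrt b := Real.sqrt_mul ha0 b
  -- expand the main hypothesis
  set r := re c with hr
  have hmain : a + m * M * b ≤ (M + m) * r := by
    have hsub_l : ∀ u v w : X, T.ip (u - v) w z = T.ip u w z - T.ip v w z := by
      intro u v w
      rw [hsub, T.add_left, T.smul_left, neg_one_mul, ← sub_eq_add_neg]
    have hsub_r : ∀ u v w : X, T.ip u (v - w) z = T.ip u v z - T.ip u w z := by
      intro u v w
      rw [T.conj_symm, hsub_l, map_sub, ← T.conj_symm, ← T.conj_symm]
    have e1 : T.ip (((M : ℝ) : 𝕜) • y - x) (x - ((m : ℝ) : 𝕜) • y) z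
        = ((M:ℝ):𝕜) * (starRingEnd 𝕜) c - ((M*m:ℝ):𝕜) * T.ip y y z
          - T.ip x x z + ((m:ℝ):𝕜) * c := by
      rw [hsub_l, hsub_r, hsub_r, T.smul_left, T.smul_left, hsmul_r, hsmul_r,
        RCLike.conj_ofReal, T.conj_symm y x z, ← hc]
      push_cast; ring
    rw [e1] at h
    have e2 : re (((M:ℝ):𝕜) * (starRingEnd 𝕜) c - ((M*m:ℝ):𝕜) * T.ip y y z
          - T.ip x x z + ((m:ℝ):𝕜) * c)
        = M * r - M * m * b - a + m * r := by
      rw [map_add, map_sub, map_sub]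
      simp only [RCLike.re_ofReal_mul, RCLike.conj_re]
      try ring
    rw [e2] at h
    linarith
  have hr0 : 0 ≤ r := by nlinarith [hmain, ha0, hb0, mul_pos hm hM0]
  -- AM-GM
  set s := Real.sqrt (m * M) with hs
  have hs0 : 0 < s := Real.sqrt_pos.2 (by positivity)
  have amgm : 2 * s * (Real.sqrt a * Real.sqrt b) ≤ a + m * M * b := by
    have h1 : Real.sqrt (m*M*b) = s * Real.sqrt b := Real.sqrt_mul (by positivity) b
    have h2 := two_mul_le_add_sq (Real.sqrt a) (Real.sqrt (m*M*b))
    rw [Real.sq_sqrt ha0, Real.sq_sqrt (by positivity : (0:ℝ) ≤ m*M*b), h1] at h2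
    nlinarith [h2]
  have key : 2 * s * (Real.sqrt a * Real.sqrt b) ≤ (M + m) * r := le_trans amgm hmain
  have hsq : (Real.sqrt M - Real.sqrt m) ^ 2 = M + m - 2 * s := by
    rw [sub_sq, Real.sq_sqrt hM0.le, Real.sq_sqrt hm.le, hs, Real.sqrt_mul hm.le]
    ring
  have hK0 : 0 ≤ (1/2) * ((Real.sqrt M - Real.sqrt m) ^ 2 / s) := by positivity
  refine ⟨by linarith [cs], by linarith [re_le_norm c], ?_, ?_⟩
  · rw [hsq]
    have heq : (1/2) * ((M + m - 2*s) / s) * r = ((M + m - 2*s) * r) / (2*s) := by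
      field_simp
      try ring
    rw [heq, le_div_iff₀ (by positivity)]
    nlinarith [key, hr0, hs0]
  · exact mul_le_mul_of_nonneg_left (re_le_norm c) hK0
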